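/- arXiv:2507.23641 — 4 statements merged into one kernel-verified Lean document; each statement's English description precedes it below -/
import Mathlib

section
/- (Thue's lemma) Let γ, b, a*, t* be nonnegative integers with 0 < a* < γ < a*·t*. Then there exist integers a, t with |a| < a*, 0 < |t| < t*, and a ≡ b·t (mod γ). -/
/-- **Thue's lemma.** Let `γ, b, a*, t*` be nonnegative integers with
`0 < a* < γ < a* · t*`. Then there exist integers `a, t` with `|a| < a*`,
`0 < |t| < t*` and `a ≡ b·t (mod γ)`. -/
theorem thue_lemma (γ b astar tstar : ℤ) (hγ : 0 ≤ γ) (hb : 0 ≤ b)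
    (hastar : 0 ≤ astar) (htstar : 0 ≤ tstar)
    (h1 : 0 < astar) (h2 : astar < γ) (h3 : γ < astar * tstar) :
    ∃ a t : ℤ, |a| < astar ∧ 0 < |t| ∧ |t| < tstar ∧ a ≡ b * t [ZMOD γ] := by
  have hγpos : 0 < γ := h1.trans h2
  set S : Finset (ℤ × ℤ) := Finset.Ico 0 astar ×ˢ Finset.Ico 0 tstar with hS
  set T : Finset ℤ := Finset.Ico 0 γ with hT
  have hmaps : ∀ p ∈ S, (p.1 - b * p.2) % γ ∈ T := by
    intro p _
    simp only [hT, Finset.mem_Ico]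
    exact ⟨Int.emod_nonneg _ hγpos.ne', Int.emod_lt_of_pos _ hγpos⟩
  have hcard : T.card < S.card := by
    simp only [hS, hT, Finset.card_product, Int.card_Ico]
    have key : γ.toNat < astar.toNat * tstar.toNat := by
      have : ((γ.toNat : ℤ)) < ((astar.toNat * tstar.toNat : ℕ) : ℤ) := by
        push_cast [Int.toNat_of_nonneg hγ, Int.toNat_of_nonneg hastar,
          Int.toNat_of_nonneg htstar]
        exact h3
      exact_mod_cast this
    simpa using key
  obtain ⟨p, hp, q, hq, hne, heq⟩ :=
    Finset.exists_ne_map_eq_of_card_lt_of_maps_to hcard hmaps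
  simp only [hS, Finset.mem_product, Finset.mem_Ico] at hp hq
  have hmod : (p.1 - b * p.2) ≡ (q.1 - b * q.2) [ZMOD γ] := heq
  have hdvd : γ ∣ (p.1 - q.1) - b * (p.2 - q.2) := by
    have := hmod.symm.dvd
    have e : (p.1 - b * p.2) - (q.1 - b * q.2) = (p.1 - q.1) - b * (p.2 - q.2) := by ring
    rw [e] at this
    exact this
  refine ⟨p.1 - q.1, p.2 - q.2, ?_, ?_, ?_, ?_⟩
  · rw [abs_lt]; omega
  · -- t ≠ 0
    rcases eq_or_ne (p.2 - q.2) 0 with ht | ht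
    · exfalso
      rw [ht, mul_zero, sub_zero] at hdvd
      have h0 : p.1 - q.1 = 0 := Int.eq_zero_of_abs_lt_dvd hdvd (by rw [abs_lt]; omega)
      apply hne
      have : p.2 = q.2 := by omega
      have : p.1 = q.1 := by omega
      exact Prod.ext ‹p.1 = q.1› ‹p.2 = q.2›
    · exact abs_pos.mpr ht
  · rw [abs_lt]; omega
  · refine Int.modEq_iff_dvd.mpr ?_
    have : b * (p.2 - q.2) - (p.1 - q.1) = -((p.1 - q.1) - b * (p.2 - q.2)) := by ring
    rw [this]
    exact dvd_neg.mpr hdvd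
end

section
/- (Lenstra) Let b_1, …, b_n ∈ F_q[x]^n be a basis of the lattice L (the F_q[x]-span of b_1, …, b_n) with orthogonality defect 0, i.e., Σ_{i=1}^n |b_i| = deg(det B) where B is the matrix with rows b_1, …, b_n, and assume |b_1| ≤ |b_2| ≤ … ≤ |b_n|. Then b_1 is a shortest nonzero vector of L: for every nonzero v ∈ L one has |v| ≥ |b_1|. -/
open Polynomial

/-- The degree-norm of a vector of polynomials: `|a| = max_i deg(a_i)`,
valued in `WithBot ℕ` (with `deg 0 = ⊥` playing the role of `-∞`). -/
def degNorm {F : Type*} [Field F] {n : ℕ} (v : Fin n → Polynomial F) : WithBot ℕ :=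
  Finset.univ.sup fun i => (v i).degree

lemma coeff_prod_of_natDegree_le' {F : Type*} [CommRing F] {ι : Type*} (s : Finset ι)
    (p : ι → Polynomial F) (e : ι → ℕ) (h : ∀ i ∈ s, (p i).natDegree ≤ e i) :
    (∏ i ∈ s, p i).coeff (∑ i ∈ s, e i) = ∏ i ∈ s, (p i).coeff (e i) := by
  induction s using Finset.cons_induction with
  | empty => simp
  | cons a s ha ih =>
    rw [Finset.prod_cons, Finset.sum_cons, coeff_mul_add_eq_of_natDegree_le
      (h a (Finset.mem_cons_self a s))
      (le_trans (natDegree_prod_le s p) (Finset.sum_le_sum fun i hi => h i (Finset.mem_cons_of_mem hi))),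
      ih fun i hi => h i (Finset.mem_cons_of_mem hi), Finset.prod_cons]

/-- **(Lenstra)** If `b_1, …, b_n` is a basis of the lattice `L ⊆ F_q[x]^n` with
orthogonality defect `0` (i.e. `Σ_i |b_i| = deg(det B)`), ordered so that
`|b_1| ≤ … ≤ |b_n|`, then `b_1` is a shortest nonzero vector of `L`. -/
theorem reduced_basis_first_is_shortest {F : Type*} [Field F] [Fintype F] {n : ℕ}
    (hn : 0 < n) (b : Fin n → (Fin n → Polynomial F))
    (hb : LinearIndependent (Polynomial F) b)
    (hred : ∑ i, degNorm (b i) = (Matrix.of b).det.degree)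
    (hsorted : Monotone fun i => degNorm (b i))
    (v : Fin n → Polynomial F)
    (hvL : v ∈ Submodule.span (Polynomial F) (Set.range b))
    (hv0 : v ≠ 0) :
    degNorm (b ⟨0, hn⟩) ≤ degNorm v := by
  classical
  -- each basis vector has a finite degree norm
  have hbne : ∀ i, b i ≠ 0 := fun i => hb.ne_zero i
  have hdex : ∀ i, ∃ d : ℕ, (d : WithBot ℕ) = degNorm (b i) := by
    intro i
    have hne : degNorm (b i) ≠ ⊥ := by
      obtain ⟨j, hj⟩ := Function.ne_iff.mp (hbne i)
      intro hbot
      have h1 : (b i j).degree ≤ degNorm (b i) :=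
        Finset.le_sup (f := fun k => (b i k).degree) (Finset.mem_univ j)
      rw [hbot, le_bot_iff, degree_eq_bot] at h1
      exact hj h1
    obtain ⟨m, hm⟩ := WithBot.ne_bot_iff_exists.mp hne
    exact ⟨m, by exact_mod_cast hm⟩
  choose d hd using hdex
  have hdegle : ∀ i j, ((b i j).natDegree : ℕ) ≤ d i := by
    intro i j
    have : (b i j).degree ≤ (d i : WithBot ℕ) :=
      (hd i) ▸ Finset.le_sup (f := fun k => (b i k).degree) (Finset.mem_univ j)
    exact natDegree_le_iff_degree_le.mpr this
  set N : ℕ := ∑ i, d i with hN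
  have hdetdeg : (Matrix.of b).det.degree = (N : WithBot ℕ) := by
    rw [← hred, hN]
    push_cast
    exact (Finset.sum_congr rfl fun i _ => (hd i)).symm
  -- the leading coefficient matrix
  set L : Matrix (Fin n) (Fin n) F := Matrix.of fun i j => (b i j).coeff (d i) with hL
  have hdetL : L.det = (Matrix.of b).det.coeff N := by
    rw [Matrix.det_apply, Matrix.det_apply, finset_sum_coeff]
    refine Finset.sum_congr rfl fun σ _ => ?_
    have key : (∏ i, (Matrix.of b) (σ i) i).coeff N = ∏ i, (b (σ i) i).coeff (d (σ i)) := by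
      rw [show N = ∑ i, d (σ i) from (Equiv.sum_comp σ d).symm]
      exact coeff_prod_of_natDegree_le' _ _ _ (fun i _ => hdegle (σ i) i)
    rw [coeff_smul, key]
    rfl
  have hdetL0 : L.det ≠ 0 := by
    rw [hdetL]
    exact coeff_ne_zero_of_eq_degree hdetdeg
  obtain ⟨c, hc⟩ := (Submodule.mem_span_range_iff_exists_fun (Polynomial F)).mp hvL
  have hc0 : c ≠ 0 := by
    rintro rfl
    apply hv0
    rw [← hc]
    simp
  -- the set of indices with nonzero coefficient
  set S : Finset (Fin n) := Finset.univ.filter (fun i => c i ≠ 0) with hS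
  have hSne : S.Nonempty := by
    obtain ⟨i, hi⟩ := Function.ne_iff.mp hc0
    exact ⟨i, by simp only [hS, Finset.mem_filter, Finset.mem_univ, true_and]; simpa using hi⟩
  set m : ℕ := S.sup' hSne (fun i => (c i).natDegree + d i) with hm
  obtain ⟨i₀, hi₀S, hi₀⟩ := Finset.exists_mem_eq_sup' hSne (fun i => (c i).natDegree + d i)
  have hci₀ : c i₀ ≠ 0 := by simpa [hS] using hi₀S
  have hmem : ∀ i ∈ S, (c i).natDegree + d i ≤ m := fun i hi => Finset.le_sup' (f := fun k => (c k).natDegree + d k) hi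
  -- the leading coefficient vector of v
  set u : Fin n → F := fun i => (c i).coeff (m - d i) with hu
  have hu0 : u i₀ ≠ 0 := by
    have : m - d i₀ = (c i₀).natDegree := by omega
    rw [hu]
    simp only [this]
    exact mt leadingCoeff_eq_zero.mp hci₀
  have hvcoeff : ∀ j, (v j).coeff m = (Matrix.vecMul u L) j := by
    intro j
    have hvj : v j = ∑ i, c i * b i j := by
      rw [← hc]
      simp [Finset.sum_apply]
    rw [hvj, finset_sum_coeff, Matrix.vecMul, dotProduct]
    refine Finset.sum_congr rfl fun i _ => ?_
    by_cases hci : c i = 0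
    · simp [hu, hci]
    · have hiS : i ∈ S := by simp [hS, hci]
      have h1 : (c i).natDegree + d i ≤ m := hmem i hiS
      have h2 : m - d i + d i = m := by omega
      have := coeff_mul_add_eq_of_natDegree_le (f := c i) (g := b i j)
        (df := m - d i) (dg := d i) (by omega) (hdegle i j)
      rw [h2] at this
      rw [this]
      rfl
  -- v has a nonzero coefficient at degree m
  have huv : Matrix.vecMul u L ≠ 0 := by
    intro h0
    exact hu0 (congrFun (Matrix.eq_zero_of_vecMul_eq_zero hdetL0 h0) i₀)
  obtain ⟨j, hj⟩ := Function.ne_iff.mp huv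
  have hdegv : (m : WithBot ℕ) ≤ degNorm v := by
    refine le_trans (le_degree_of_ne_zero (n := m) (p := v j) ?_)
      (Finset.le_sup (f := fun k => (v k).degree) (Finset.mem_univ j))
    rw [hvcoeff j]
    exact hj
  calc degNorm (b ⟨0, hn⟩) ≤ degNorm (b i₀) := hsorted (Fin.mk_le_of_le_val (Nat.zero_le _))
    _ = (d i₀ : WithBot ℕ) := (hd i₀).symm
    _ ≤ (m : WithBot ℕ) := by exact_mod_cast by omega
    _ ≤ degNorm v := hdegv
end

section
/- (Mahler) Let L ⊆ F_q[x]^n be a lattice of full rank n, with covolume covol(L) = deg(det L). Then there exist n linearly independent vectors m_1, …, m_n ∈ L with Σ_{j=1}^n |m_j| = covol(L), and these attain the successive minima of L; in particular, for any n linearly independent vectors v_1, …, v_n ∈ L one has Σ_{j=1}^n |v_j| ≥ covol(L). -/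
open Polynomial

section MahlerAux

variable {F : Type*} [Field F] {n : ℕ}

/-- max of natDegrees -/
def natNorm (v : Fin n → Polynomial F) : ℕ :=
  Finset.univ.sup fun i => (v i).natDegree

/-- leading coefficient vector -/
def lv (v : Fin n → Polynomial F) : Fin n → F :=
  fun j => (v j).coeff (natNorm v)

lemma natDegree_le_natNorm (v : Fin n → Polynomial F) (i : Fin n) :
    (v i).natDegree ≤ natNorm v :=
  Finset.le_sup (f := fun i => (v i).natDegree) (Finset.mem_univ i)

lemma degree_le_natNorm (v : Fin n → Polynomial F) (i : Fin n) :
    (v i).degree ≤ (natNorm v : WithBot ℕ) :=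
  (degree_le_natDegree).trans (by exact_mod_cast natDegree_le_natNorm v i)

lemma degNorm_le_natNorm (v : Fin n → Polynomial F) :
    degNorm v ≤ (natNorm v : WithBot ℕ) :=
  Finset.sup_le fun i _ => degree_le_natNorm v i

lemma exists_attains {v : Fin n → Polynomial F} (hv : v ≠ 0) :
    ∃ i, v i ≠ 0 ∧ (v i).natDegree = natNorm v := by
  obtain ⟨i0, hi0⟩ : ∃ i, v i ≠ 0 := by
    by_contra h; push_neg at h; exact hv (funext fun i => h i)
  obtain ⟨i, -, hi⟩ := Finset.exists_mem_eq_sup Finset.univ ⟨i0, Finset.mem_univ i0⟩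
      fun i => (v i).natDegree
  by_cases h : v i = 0
  · refine ⟨i0, hi0, le_antisymm (natDegree_le_natNorm v i0) ?_⟩
    show Finset.univ.sup (fun i => (v i).natDegree) ≤ _
    rw [hi, h, natDegree_zero]; exact Nat.zero_le _
  · exact ⟨i, h, hi.symm⟩

lemma degNorm_eq_natNorm {v : Fin n → Polynomial F} (hv : v ≠ 0) :
    degNorm v = (natNorm v : WithBot ℕ) := by
  obtain ⟨i, hi, hdeg⟩ := exists_attains hv
  refine le_antisymm (degNorm_le_natNorm v) ?_
  have : (v i).degree = (natNorm v : WithBot ℕ) := by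
    rw [degree_eq_natDegree hi, hdeg]
  rw [← this]
  exact Finset.le_sup (f := fun i => (v i).degree) (Finset.mem_univ i)

lemma lv_ne_zero {v : Fin n → Polynomial F} (hv : v ≠ 0) : lv v ≠ 0 := by
  obtain ⟨i, hi, hdeg⟩ := exists_attains hv
  intro h
  have : lv v i = 0 := by rw [h]; rfl
  rw [lv, ← hdeg] at this
  exact hi (leadingCoeff_eq_zero.mp this)


lemma coeff_prod_at_sum {ι : Type*} (s : Finset ι) (f : ι → Polynomial F) (e : ι → ℕ)
    (h : ∀ i ∈ s, (f i).natDegree ≤ e i) :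
    (∏ i ∈ s, f i).coeff (∑ i ∈ s, e i) = ∏ i ∈ s, (f i).coeff (e i) := by
  classical
  induction s using Finset.cons_induction with
  | empty => simp
  | cons a s ha ih =>
    have hrest : (∏ i ∈ s, f i).natDegree ≤ ∑ i ∈ s, e i :=
      (natDegree_prod_le _ _).trans
        (Finset.sum_le_sum fun i hi => h i (Finset.mem_cons_of_mem hi))
    rw [Finset.prod_cons, Finset.sum_cons, Finset.prod_cons,
      coeff_mul_add_eq_of_natDegree_le (h a (Finset.mem_cons_self a s)) hrest,
      ih fun i hi => h i (Finset.mem_cons_of_mem hi)]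

lemma coeff_det_at (m : Fin n → (Fin n → Polynomial F)) (e : Fin n → ℕ)
    (h : ∀ i j, (m i j).natDegree ≤ e i) :
    (Matrix.of m).det.coeff (∑ i, e i) =
      (Matrix.of fun i j => (m i j).coeff (e i)).det := by
  rw [Matrix.det_apply, Matrix.det_apply, finset_sum_coeff]
  refine Finset.sum_congr rfl fun σ _ => ?_
  rw [coeff_smul]
  congr 1
  have hs : (∑ i, e i) = ∑ i, e (σ i) := (Equiv.sum_comp σ e).symm
  rw [hs, coeff_prod_at_sum Finset.univ (fun i => (Matrix.of m) (σ i) i) (fun i => e (σ i))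
    (fun i _ => h (σ i) i)]
  rfl

lemma degree_det_le' (m : Fin n → (Fin n → Polynomial F)) :
    (Matrix.of m).det.degree ≤ ∑ i, degNorm (m i) := by
  rw [Matrix.det_apply]
  refine (degree_sum_le _ _).trans ?_
  refine Finset.sup_le fun σ _ => ?_
  have h1 : ((Equiv.Perm.sign σ : ℤ) • ∏ i, (Matrix.of m) (σ i) i).degree
      ≤ (∏ i, (Matrix.of m) (σ i) i).degree := by
    rcases Int.units_eq_one_or (Equiv.Perm.sign σ) with h | h <;> simp [h]
  refine h1.trans ?_
  rw [degree_prod]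
  have h2 : ∀ i, ((Matrix.of m) (σ i) i).degree ≤ degNorm (m (σ i)) := by
    intro i
    exact Finset.le_sup (f := fun j => (m (σ i) j).degree) (Finset.mem_univ i)
  calc ∑ i, ((Matrix.of m) (σ i) i).degree ≤ ∑ i, degNorm (m (σ i)) :=
        Finset.sum_le_sum fun i _ => h2 i
    _ = ∑ i, degNorm (m i) := Equiv.sum_comp σ (fun i => degNorm (m i))

lemma vecMul_of_eq {R : Type*} [CommRing R] (m : Fin n → (Fin n → R)) (v : Fin n → R) :
    Matrix.vecMul v (Matrix.of m) = ∑ i, v i • m i := by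
  ext j
  simp [Matrix.vecMul, dotProduct, Finset.sum_apply]

lemma li_iff_det {R : Type*} [CommRing R] [IsDomain R] (m : Fin n → (Fin n → R)) :
    LinearIndependent R m ↔ (Matrix.of m).det ≠ 0 := by
  rw [Fintype.linearIndependent_iff, Ne, ← Matrix.exists_vecMul_eq_zero_iff]
  push_neg
  constructor
  · intro h v hv hvM
    exact hv (funext (h v (by rw [← vecMul_of_eq]; exact hvM)))
  · intro h g hg i
    by_contra hgi
    exact h g (fun hg0 => hgi (by rw [hg0]; rfl)) (by rw [vecMul_of_eq]; exact hg)


lemma lv_li_det_ne {m : Fin n → (Fin n → Polynomial F)}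
    (hlead : LinearIndependent F (fun i => lv (m i))) :
    (Matrix.of fun i j => (m i j).coeff (natNorm (m i))).det ≠ 0 :=
  (li_iff_det (fun i => lv (m i))).mp hlead

lemma ne_zero_of_lv_li {m : Fin n → (Fin n → Polynomial F)}
    (hlead : LinearIndependent F (fun i => lv (m i))) (i : Fin n) : m i ≠ 0 := by
  intro h
  have := hlead.ne_zero i
  apply this
  funext j
  simp [lv, h]

/-- Lemma B -/
lemma degree_det_of_lv_li {m : Fin n → (Fin n → Polynomial F)}
    (hlead : LinearIndependent F (fun i => lv (m i))) :
    (Matrix.of m).det.degree = ∑ i, degNorm (m i) := by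
  have hsum : (∑ i, degNorm (m i)) = ((∑ i, natNorm (m i) : ℕ) : WithBot ℕ) := by
    rw [Nat.cast_sum]
    exact Finset.sum_congr rfl fun i _ => degNorm_eq_natNorm (ne_zero_of_lv_li hlead i)
  refine le_antisymm (degree_det_le' m) ?_
  rw [hsum]
  apply le_degree_of_ne_zero
  rw [coeff_det_at m (fun i => natNorm (m i)) (fun i j => natDegree_le_natNorm (m i) j)]
  exact lv_li_det_ne hlead

/-- factor determinant through a span -/
lemma det_factor {m v : Fin n → (Fin n → Polynomial F)}
    (hv : ∀ i, v i ∈ Submodule.span (Polynomial F) (Set.range m)) :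
    ∃ c : Polynomial F, (Matrix.of v).det = c * (Matrix.of m).det := by
  choose c hc using fun i => (Submodule.mem_span_range_iff_exists_fun (Polynomial F)).mp (hv i)
  refine ⟨(Matrix.of c).det, ?_⟩
  have : Matrix.of v = Matrix.of c * Matrix.of m := by
    refine Matrix.ext fun i j => ?_
    have h := congrFun (hc i) j
    simp only [Finset.sum_apply, Pi.smul_apply, smul_eq_mul] at h
    rw [Matrix.mul_apply]
    exact h.symm
  rw [this, Matrix.det_mul]

/-- Lemma C : lower bound for norm of a combination w.r.t. reduced system -/
lemma le_degNorm_comb {m : Fin n → (Fin n → Polynomial F)}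
    (hlead : LinearIndependent F (fun i => lv (m i)))
    (c : Fin n → Polynomial F) {k0 : Fin n} (hc : c k0 ≠ 0) :
    (natNorm (m k0) : WithBot ℕ) ≤ degNorm (∑ k, c k • m k) := by
  classical
  set s : Finset (Fin n) := Finset.univ.filter (fun k => c k ≠ 0) with hs
  have hk0 : k0 ∈ s := by simp [hs, hc]
  have hsne : s.Nonempty := ⟨k0, hk0⟩
  set D : ℕ := s.sup' hsne (fun k => (c k).natDegree + natNorm (m k)) with hD
  obtain ⟨k1, hk1s, hk1⟩ := Finset.exists_mem_eq_sup' hsne (fun k => (c k).natDegree + natNorm (m k))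
  set w : Fin n → Polynomial F := ∑ k, c k • m k with hw
  -- the coefficient vector of w at level D
  have hcoeff : ∀ j, (w j).coeff D =
      ∑ k, (if k ∈ s then (c k).coeff (D - natNorm (m k)) else 0) * (lv (m k)) j := by
    intro j
    have : w j = ∑ k, c k * m k j := by simp [hw, Finset.sum_apply]
    rw [this, finset_sum_coeff]
    refine Finset.sum_congr rfl fun k _ => ?_
    by_cases hk : k ∈ s
    · have hkle : (c k).natDegree + natNorm (m k) ≤ D := by
        rw [hD]; exact Finset.le_sup' (fun k => (c k).natDegree + natNorm (m k)) hk
      have h1 : natNorm (m k) ≤ D := le_trans (Nat.le_add_left _ _) hkle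
      have h2 : (c k).natDegree ≤ D - natNorm (m k) := by omega
      have hDeq : D = (D - natNorm (m k)) + natNorm (m k) := by omega
      have hmul := coeff_mul_add_eq_of_natDegree_le (f := c k) (g := m k j) h2
        (natDegree_le_natNorm (m k) j)
      rw [← hDeq] at hmul
      rw [if_pos hk, hmul]
      rfl
    · have : c k = 0 := by simpa [hs] using hk
      simp [this]
  -- nonvanishing
  have hg : ¬ ∀ k, (if k ∈ s then (c k).coeff (D - natNorm (m k)) else 0) = 0 := by
    intro hall
    have := hall k1
    rw [if_pos hk1s] at this
    have hD1 : D - natNorm (m k1) = (c k1).natDegree := by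
      have : D = (c k1).natDegree + natNorm (m k1) := hk1
      omega
    rw [hD1] at this
    have : c k1 = 0 := leadingCoeff_eq_zero.mp this
    exact (by simpa [hs] using hk1s : c k1 ≠ 0) this
  have hvecne : (fun j => (w j).coeff D) ≠ 0 := by
    intro h0
    apply hg
    have := Fintype.linearIndependent_iff.mp hlead
      (fun k => if k ∈ s then (c k).coeff (D - natNorm (m k)) else 0) ?_
    · exact this
    · funext j
      have h0j : (w j).coeff D = 0 := congrFun h0 j
      rw [hcoeff j] at h0j
      simp only [Finset.sum_apply, Pi.smul_apply, smul_eq_mul]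
      exact h0j
  obtain ⟨j, hj⟩ : ∃ j, (w j).coeff D ≠ 0 := by
    by_contra h
    push_neg at h
    exact hvecne (funext fun j => h j)
  have h1 : (D : WithBot ℕ) ≤ (w j).degree := le_degree_of_ne_zero hj
  have h2 : (w j).degree ≤ degNorm w :=
    Finset.le_sup (f := fun i => (w i).degree) (Finset.mem_univ j)
  have h3 : natNorm (m k0) ≤ D := by
    have : (c k0).natDegree + natNorm (m k0) ≤ D := by
      rw [hD]; exact Finset.le_sup' (fun k => (c k).natDegree + natNorm (m k)) hk0
    omega
  calc (natNorm (m k0) : WithBot ℕ) ≤ (D : WithBot ℕ) := by exact_mod_cast h3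
    _ ≤ _ := h1.trans h2

lemma degree_det_le_of_mem_span {m v : Fin n → (Fin n → Polynomial F)}
    (hm : LinearIndependent (Polynomial F) m)
    (hv : ∀ i, v i ∈ Submodule.span (Polynomial F) (Set.range m))
    (hvli : LinearIndependent (Polynomial F) v) :
    (Matrix.of m).det.degree ≤ (Matrix.of v).det.degree := by
  obtain ⟨c, hc⟩ := det_factor hv
  have hvne : (Matrix.of v).det ≠ 0 := (li_iff_det v).mp hvli
  have hcne : c ≠ 0 := by rintro rfl; simp at hc; exact hvne hc
  calc (Matrix.of m).det.degree = 0 + (Matrix.of m).det.degree := (zero_add _).symm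
    _ ≤ c.degree + (Matrix.of m).det.degree :=
        add_le_add_left (zero_le_degree_iff.mpr hcne) _
    _ = (Matrix.of v).det.degree := by rw [hc, degree_mul]

lemma degree_det_eq_of_span_eq {m b : Fin n → (Fin n → Polynomial F)}
    (hm : LinearIndependent (Polynomial F) m) (hb : LinearIndependent (Polynomial F) b)
    (h : Submodule.span (Polynomial F) (Set.range m) = Submodule.span (Polynomial F) (Set.range b)) :
    (Matrix.of m).det.degree = (Matrix.of b).det.degree := by
  have h1 : ∀ i, m i ∈ Submodule.span (Polynomial F) (Set.range b) := fun i =>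
    h ▸ Submodule.subset_span (Set.mem_range_self i)
  have h2 : ∀ i, b i ∈ Submodule.span (Polynomial F) (Set.range m) := fun i =>
    h ▸ Submodule.subset_span (Set.mem_range_self i)
  exact le_antisymm (degree_det_le_of_mem_span hm h2 hb)
    (degree_det_le_of_mem_span hb h1 hm)

lemma exists_reduced (b : Fin n → (Fin n → Polynomial F))
    (hb : LinearIndependent (Polynomial F) b) :
    ∃ m : Fin n → (Fin n → Polynomial F),
      Submodule.span (Polynomial F) (Set.range m)
        = Submodule.span (Polynomial F) (Set.range b) ∧
      LinearIndependent (Polynomial F) m ∧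
      LinearIndependent F (fun i => lv (m i)) := by
  classical
  set P : ℕ → Prop := fun t => ∃ m : Fin n → (Fin n → Polynomial F),
    Submodule.span (Polynomial F) (Set.range m)
      = Submodule.span (Polynomial F) (Set.range b) ∧
    LinearIndependent (Polynomial F) m ∧ (∑ i, natNorm (m i)) = t with hPdef
  have hne : {t | P t}.Nonempty := ⟨∑ i, natNorm (b i), b, rfl, hb, rfl⟩
  obtain ⟨m, hspan, hli, hsum⟩ := Nat.sInf_mem hne
  refine ⟨m, hspan, hli, ?_⟩
  by_contra hnl
  obtain ⟨g, hg0, k, hk⟩ := Fintype.not_linearIndependent_iff.mp hnl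
  set s : Finset (Fin n) := Finset.univ.filter (fun k => g k ≠ 0) with hsdef
  have hks : k ∈ s := by simp [hsdef, hk]
  have hsne : s.Nonempty := ⟨k, hks⟩
  set D : ℕ := s.sup' hsne (fun k => natNorm (m k)) with hD
  obtain ⟨k1, hk1s, hk1⟩ := Finset.exists_mem_eq_sup' hsne (fun k => natNorm (m k))
  have hg1 : g k1 ≠ 0 := by simpa [hsdef] using hk1s
  have hDk1 : D = natNorm (m k1) := by rw [hD, hk1]
  set e : Fin n → ℕ := fun k => D - natNorm (m k) with he
  have heD : ∀ k ∈ s, natNorm (m k) + e k = D := by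
    intro k hkmem
    have : natNorm (m k) ≤ D := by
      rw [hD]; exact Finset.le_sup' (fun k => natNorm (m k)) hkmem
    simp [he]; omega
  set w : Fin n → Polynomial F := ∑ k ∈ s, (C (g k) * X ^ e k) • m k with hw
  set m' : Fin n → (Fin n → Polynomial F) := Function.update m k1 w with hm'
  -- w ∈ span range m
  have hwmem : w ∈ Submodule.span (Polynomial F) (Set.range m) :=
    Submodule.sum_mem _ fun k _ => Submodule.smul_mem _ _
      (Submodule.subset_span (Set.mem_range_self k))
  -- span m' ≤ span m
  have hle1 : Submodule.span (Polynomial F) (Set.range m')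
      ≤ Submodule.span (Polynomial F) (Set.range m) := by
    rw [Submodule.span_le]
    rintro - ⟨i, rfl⟩
    by_cases hi : i = k1
    · subst hi; rw [hm', Function.update_self]; exact hwmem
    · rw [hm', Function.update_of_ne hi]
      exact Submodule.subset_span (Set.mem_range_self i)
  -- m k1 ∈ span range m'
  have hek1 : e k1 = 0 := by rw [he]; simp [hDk1]
  have hkey : (C (g k1)) • m k1 = w - ∑ k ∈ s.erase k1, (C (g k) * X ^ e k) • m k := by
    rw [hw, ← Finset.add_sum_erase s _ hk1s, hek1]
    simp
  have hmk1mem : m k1 ∈ Submodule.span (Polynomial F) (Set.range m') := by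
    have h1 : w ∈ Submodule.span (Polynomial F) (Set.range m') := by
      have : m' k1 = w := Function.update_self _ _ _
      exact this ▸ Submodule.subset_span (Set.mem_range_self k1)
    have h2 : ∑ k ∈ s.erase k1, (C (g k) * X ^ e k) • m k
        ∈ Submodule.span (Polynomial F) (Set.range m') := by
      refine Submodule.sum_mem _ fun k hkmem => Submodule.smul_mem _ _ ?_
      have hne' : k ≠ k1 := Finset.ne_of_mem_erase hkmem
      have : m' k = m k := Function.update_of_ne hne' _ _
      exact this ▸ Submodule.subset_span (Set.mem_range_self k)
    have h3 : (C (g k1)) • m k1 ∈ Submodule.span (Polynomial F) (Set.range m') := by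
      rw [hkey]; exact Submodule.sub_mem _ h1 h2
    have := Submodule.smul_mem _ (C (g k1)⁻¹) h3
    rwa [smul_smul, ← C_mul, inv_mul_cancel₀ hg1, C_1, one_smul] at this
  have hle2 : Submodule.span (Polynomial F) (Set.range m)
      ≤ Submodule.span (Polynomial F) (Set.range m') := by
    rw [Submodule.span_le]
    rintro - ⟨i, rfl⟩
    by_cases hi : i = k1
    · subst hi; exact hmk1mem
    · rw [show m i = m' i from (Function.update_of_ne hi _ _).symm]
      exact Submodule.subset_span (Set.mem_range_self i)
  have hspan' : Submodule.span (Polynomial F) (Set.range m')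
      = Submodule.span (Polynomial F) (Set.range m) := le_antisymm hle1 hle2
  -- m' is linearly independent
  have hli' : LinearIndependent (Polynomial F) m' := by
    rw [li_iff_det]
    obtain ⟨c, hc⟩ := det_factor (m := m') (v := m)
      (fun i => hle2 (Submodule.subset_span (Set.mem_range_self i)))
    intro h0
    rw [h0, mul_zero] at hc
    exact (li_iff_det m).mp hli hc
  -- coefficient of w at level D vanishes
  have hcoeffD : ∀ j, (w j).coeff D = 0 := by
    intro j
    have hwj : w j = ∑ k ∈ s, (C (g k) * X ^ e k) * m k j := by
      simp [hw, Finset.sum_apply]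
    rw [hwj, finset_sum_coeff]
    have : ∀ k ∈ s, ((C (g k) * X ^ e k) * m k j).coeff D = g k * lv (m k) j := by
      intro k hkmem
      rw [mul_assoc, coeff_C_mul, ← heD k hkmem, coeff_X_pow_mul]
      rfl
    rw [Finset.sum_congr rfl this]
    have hext : ∑ k ∈ s, g k * lv (m k) j = ∑ k : Fin n, g k * lv (m k) j := by
      refine Finset.sum_subset (Finset.subset_univ s) fun k _ hk' => ?_
      have : g k = 0 := by
        by_contra h'; exact hk' (by simp [hsdef, h'])
      simp [this]
    rw [hext]
    have := congrFun hg0 j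
    simpa [Finset.sum_apply] using this
  -- degree bound for w
  have hdegw : ∀ j, (w j).degree ≤ (D : WithBot ℕ) := by
    intro j
    have hwj : w j = ∑ k ∈ s, (C (g k) * X ^ e k) * m k j := by
      simp [hw, Finset.sum_apply]
    rw [hwj]
    refine (degree_sum_le _ _).trans (Finset.sup_le fun k hkmem => ?_)
    refine (degree_mul_le _ _).trans ?_
    have h1 : (C (g k) * X ^ e k).degree ≤ (e k : WithBot ℕ) :=
      (degree_C_mul_X_pow_le _ _)
    have h2 : (m k j).degree ≤ (natNorm (m k) : WithBot ℕ) :=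
      degree_le_natDegree.trans (by exact_mod_cast natDegree_le_natNorm (m k) j)
    calc (C (g k) * X ^ e k).degree + (m k j).degree
        ≤ (e k : WithBot ℕ) + (natNorm (m k) : WithBot ℕ) := add_le_add h1 h2
      _ = ((e k + natNorm (m k) : ℕ) : WithBot ℕ) := by push_cast; ring
      _ = (D : WithBot ℕ) := by rw [Nat.add_comm, heD k hkmem]
  have hdegwlt : ∀ j, (w j).degree < (D : WithBot ℕ) := by
    intro j
    refine lt_of_le_of_ne (hdegw j) fun hEq => ?_
    have hne0 : w j ≠ 0 := by
      intro h; rw [h, degree_zero] at hEq; exact (WithBot.bot_ne_coe hEq)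
    have hnat : (w j).natDegree = D := natDegree_eq_of_degree_eq_some hEq
    have : (w j).coeff D ≠ 0 := by
      rw [← hnat]; exact mt leadingCoeff_eq_zero.mp hne0
    exact this (hcoeffD j)
  -- w ≠ 0, D positive, natNorm w < D
  have hwne : w ≠ 0 := by
    have := hli'.ne_zero k1
    rwa [hm', Function.update_self] at this
  obtain ⟨j0, hj0⟩ : ∃ j, w j ≠ 0 := by
    by_contra h; push_neg at h; exact hwne (funext h)
  have hDpos : 0 < D := by
    have h1 : (0 : WithBot ℕ) ≤ (w j0).degree := zero_le_degree_iff.mpr hj0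
    have := lt_of_le_of_lt h1 (hdegwlt j0)
    exact_mod_cast this
  have hnw : natNorm w < D := by
    rw [natNorm]
    refine Finset.sup_lt_iff (by exact_mod_cast hDpos : (⊥ : ℕ) < D) |>.mpr fun j _ => ?_
    by_cases hj : w j = 0
    · simpa [hj] using hDpos
    · have := hdegwlt j
      rwa [degree_eq_natDegree hj, Nat.cast_lt] at this
  -- sum decreases: contradiction with minimality
  have hsum' : (∑ i, natNorm (m' i)) < ∑ i, natNorm (m i) := by
    have h1 : ∑ i, natNorm (m' i)
        = natNorm (m' k1) + ∑ i ∈ Finset.univ.erase k1, natNorm (m' i) :=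
      (Finset.add_sum_erase _ (fun i => natNorm (m' i)) (Finset.mem_univ k1)).symm
    have h2 : ∑ i, natNorm (m i)
        = natNorm (m k1) + ∑ i ∈ Finset.univ.erase k1, natNorm (m i) :=
      (Finset.add_sum_erase _ (fun i => natNorm (m i)) (Finset.mem_univ k1)).symm
    have h3 : ∑ i ∈ Finset.univ.erase k1, natNorm (m' i)
        = ∑ i ∈ Finset.univ.erase k1, natNorm (m i) :=
      Finset.sum_congr rfl fun i hi => by
        rw [hm', Function.update_of_ne (Finset.ne_of_mem_erase hi)]
    have h4 : natNorm (m' k1) = natNorm w := by rw [hm', Function.update_self]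
    have h5 : natNorm w < natNorm (m k1) := hDk1 ▸ hnw
    omega
  have hmem : P (∑ i, natNorm (m' i)) := ⟨m', hspan'.trans hspan, hli', rfl⟩
  have := Nat.sInf_le (show (∑ i, natNorm (m' i)) ∈ {t | P t} from hmem)
  omega


end MahlerAux

/-- **(Mahler)** Let `L ⊆ F_q[x]^n` be a full-rank lattice, spanned by linearly
independent `b_1, …, b_n`, with covolume `covol(L) = deg(det B)`.  Then there exist
`n` linearly independent vectors `m_1, …, m_n ∈ L` with `Σ_j |m_j| = covol(L)`, and
these attain the successive minima of `L` (ordered by norm, `|m_j|` is at most the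
max-norm of any `j` linearly independent vectors of `L`); in particular, for any `n`
linearly independent `v_1, …, v_n ∈ L` one has `Σ_j |v_j| ≥ covol(L)`. -/
theorem mahler_sum_successive_minima {F : Type*} [Field F] [Fintype F] {n : ℕ}
    (b : Fin n → (Fin n → Polynomial F))
    (hb : LinearIndependent (Polynomial F) b) :
    (∃ m : Fin n → (Fin n → Polynomial F),
      (∀ i, m i ∈ Submodule.span (Polynomial F) (Set.range b)) ∧
      LinearIndependent (Polynomial F) m ∧
      (∑ j, degNorm (m j)) = (Matrix.of b).det.degree ∧
      (Monotone fun j => degNorm (m j)) ∧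
      ∀ j : Fin n, ∀ v : Fin (j.1 + 1) → (Fin n → Polynomial F),
        (∀ i, v i ∈ Submodule.span (Polynomial F) (Set.range b)) →
        LinearIndependent (Polynomial F) v →
        degNorm (m j) ≤ Finset.univ.sup fun i => degNorm (v i)) ∧
    ∀ v : Fin n → (Fin n → Polynomial F),
      (∀ i, v i ∈ Submodule.span (Polynomial F) (Set.range b)) →
      LinearIndependent (Polynomial F) v →
      (Matrix.of b).det.degree ≤ ∑ j, degNorm (v j) := by
  classical
  constructor
  · obtain ⟨m0, hspan0, hli0, hlead0⟩ := exists_reduced b hb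
    set f : Fin n → WithBot ℕ := fun i => degNorm (m0 i) with hf
    set σ : Equiv.Perm (Fin n) := Tuple.sort f with hσ
    set m : Fin n → (Fin n → Polynomial F) := m0 ∘ σ with hm
    have hrange : Set.range m = Set.range m0 := by
      rw [hm]; exact σ.surjective.range_comp m0
    have hspanm : Submodule.span (Polynomial F) (Set.range m)
        = Submodule.span (Polynomial F) (Set.range b) := by rw [hrange, hspan0]
    have hli : LinearIndependent (Polynomial F) m := hli0.comp σ σ.injective
    have hlead : LinearIndependent F (fun i => lv (m i)) := by
      have := hlead0.comp σ σ.injective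
      exact this
    refine ⟨m, ?_, hli, ?_, ?_, ?_⟩
    · intro i
      rw [← hspanm]
      exact Submodule.subset_span (Set.mem_range_self i)
    · have h1 : (∑ j, degNorm (m j)) = ∑ j, degNorm (m0 j) :=
        Equiv.sum_comp σ (fun i => degNorm (m0 i))
      rw [h1, ← degree_det_of_lv_li hlead0]
      exact degree_det_eq_of_span_eq hli0 hb hspan0
    · exact Tuple.monotone_sort f
    · intro j v hv hvli
      by_contra hlt
      push_neg at hlt
      -- each v i lies in the span of the first j.1 vectors of m
      set u : Fin j.1 → (Fin n → Polynomial F) := fun t => m (Fin.castLE j.2.le t) with hu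
      set N : Submodule (Polynomial F) (Fin n → Polynomial F) :=
        Submodule.span (Polynomial F) (Set.range u) with hN
      have hmono : Monotone fun j => degNorm (m j) := Tuple.monotone_sort f
      have hmemN : ∀ i, v i ∈ N := by
        intro i
        have hvm : v i ∈ Submodule.span (Polynomial F) (Set.range m) := by
          rw [hspanm]; exact hv i
        obtain ⟨c, hc⟩ := (Submodule.mem_span_range_iff_exists_fun (Polynomial F)).mp hvm
        have hzero : ∀ k : Fin n, j ≤ k → c k = 0 := by
          intro k hjk
          by_contra hck
          have h1 : (natNorm (m k) : WithBot ℕ) ≤ degNorm (v i) := by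
            rw [← hc]; exact le_degNorm_comb hlead c hck
          have h2 : degNorm (v i) ≤ Finset.univ.sup fun i => degNorm (v i) :=
            Finset.le_sup (f := fun i => degNorm (v i)) (Finset.mem_univ i)
          have h3 : degNorm (m j) ≤ degNorm (m k) := hmono hjk
          have h4 : m k ≠ 0 := hli.ne_zero k
          have h5 : degNorm (m k) = (natNorm (m k) : WithBot ℕ) := degNorm_eq_natNorm h4
          have := (h1.trans h2).trans_lt hlt
          rw [← h5] at this
          exact absurd h3 (not_le.mpr this)
        refine (Submodule.mem_span_range_iff_exists_fun (Polynomial F)).mpr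
          ⟨fun t => c (Fin.castLE j.2.le t), ?_⟩
        rw [← hc]
        have hemb : Function.Injective (Fin.castLE j.2.le) := Fin.castLE_injective _
        rw [show (∑ k, c k • m k) = ∑ k ∈ (Finset.univ.map ⟨Fin.castLE j.2.le, hemb⟩),
            c k • m k from ?_]
        · rw [Finset.sum_map]
          rfl
        · symm
          refine Finset.sum_subset (Finset.subset_univ _) fun k _ hk' => ?_
          have hjk : j ≤ k := by
            rw [Fin.le_def]
            by_contra hlt'
            push_neg at hlt'
            exact hk' (Finset.mem_map.mpr ⟨⟨k.1, hlt'⟩, Finset.mem_univ _, by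
              simp [Fin.castLE]⟩)
          rw [hzero k hjk, zero_smul]
      -- rank contradiction
      have hvN : LinearIndependent (Polynomial F) (fun i => (⟨v i, hmemN i⟩ : N)) := by
        apply LinearIndependent.of_comp N.subtype
        exact hvli
      have hr1 : ((j.1 + 1 : ℕ) : Cardinal) ≤ Module.rank (Polynomial F) N := by
        have h := hvN.cardinal_lift_le_rank
        rw [Cardinal.mk_fintype, Fintype.card_fin] at h
        simpa using h
      have hr2 : Module.rank (Polynomial F) N ≤ ((j.1 : ℕ) : Cardinal) := by
        refine (rank_span_le _).trans ?_
        have h := Cardinal.mk_range_le_lift (f := u)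
        rw [Cardinal.mk_fin] at h
        simpa [Cardinal.lift_natCast] using h
      have := hr1.trans hr2
      rw [Nat.cast_le] at this
      omega
  · intro v hv hvli
    exact (degree_det_le_of_mem_span hb hv hvli).trans (degree_det_le' v)
end

section
/- (Mahler's corollary) Let L ⊆ F_q[x]^n be a lattice of full rank n with covolume covol(L) = deg(det L). Then there exists a nonzero vector v ∈ L with n · |v| ≤ covol(L), i.e., a nonzero lattice vector of degree-norm at most covol(L)/n. -/
open Polynomial

set_option maxHeartbeats 1000000 in
set_option synthInstance.maxHeartbeats 400000 in
/-- The determinant of a matrix with linearly independent rows over `F[x]` is nonzero. -/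
theorem det_ne_zero_of_linearIndependent_rows {F : Type*} [Field F] {n : ℕ}
    (b : Fin n → (Fin n → Polynomial F))
    (hb : LinearIndependent (Polynomial F) b) : (Matrix.of b).det ≠ 0 := by
  classical
  have hfinj : Function.Injective (algebraMap (Polynomial F) (RatFunc F)) :=
    IsFractionRing.injective _ _
  set b' : Fin n → (Fin n → RatFunc F) :=
    fun i j => algebraMap (Polynomial F) (RatFunc F) (b i j) with hb'
  have hli' : LinearIndependent (Polynomial F) b' := by
    have hmap : b' = fun i =>
        (LinearMap.compLeft (Algebra.linearMap (Polynomial F) (RatFunc F)) (Fin n)) (b i) := rfl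
    rw [hmap]
    apply LinearIndependent.map' hb
    rw [LinearMap.ker_eq_bot]
    intro x y hxy
    funext j
    exact hfinj (congrFun hxy j)
  have hliK : LinearIndependent (RatFunc F) b' :=
    (LinearIndependent.iff_fractionRing (Polynomial F) (RatFunc F)).mp hli'
  have hunit : IsUnit (Matrix.of b') := Matrix.linearIndependent_rows_iff_isUnit.mp hliK
  have hdet' : (Matrix.of b').det ≠ 0 := by
    intro h
    have h2 := hunit.map Matrix.detMonoidHom
    rw [Matrix.coe_detMonoidHom, h] at h2
    exact h2.ne_zero rfl
  intro h
  apply hdet'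
  have h3 : Matrix.of b' = (algebraMap (Polynomial F) (RatFunc F)).mapMatrix (Matrix.of b) := rfl
  rw [h3, ← RingHom.map_det, h, map_zero]

/-- The degree of the determinant equals the sum of the degrees of the diagonal entries
of any Smith normal form of the lattice spanned by the rows. -/
theorem degree_det_eq_sum_smith {F : Type*} [Field F] {n : ℕ}
    (b : Fin n → (Fin n → Polynomial F))
    (hb : LinearIndependent (Polynomial F) b)
    (hdet : (Matrix.of b).det ≠ 0)
    (S : Module.Basis.SmithNormalForm (Submodule.span (Polynomial F) (Set.range b)) (Fin n) n) :
    (Matrix.of b).det.degree = ∑ i, (S.a i).degree := by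
  classical
  set std := Pi.basisFun (Polynomial F) (Fin n) with hstd
  set w : Fin n → (Fin n → Polynomial F) := fun i => ((S.bN i : Fin n → Polynomial F)) with hw
  have e0 : (Matrix.of w).det = std.det w := by
    rw [Pi.basisFun_det]; rfl
  have e1 : std.det w = (∏ i, S.a i) • std.det fun i => S.bM (S.f i) := by
    have : w = fun i => S.a i • S.bM (S.f i) := funext fun i => S.snf i
    rw [this]
    exact std.det.toMultilinearMap.map_smul_univ S.a fun i => S.bM (S.f i)
  have hfbij : Function.Bijective S.f := Finite.injective_iff_bijective.mp S.f.injective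
  set σ : Equiv.Perm (Fin n) := Equiv.ofBijective S.f hfbij with hσ
  have e2 : (std.det fun i => S.bM (S.f i)) = Equiv.Perm.sign σ • std.det S.bM := by
    have : (fun i => S.bM (S.f i)) = S.bM ∘ σ := rfl
    rw [this]
    exact AlternatingMap.map_perm std.det S.bM σ
  have hu : IsUnit (Equiv.Perm.sign σ • std.det S.bM : Polynomial F) := by
    rcases Int.units_eq_one_or (Equiv.Perm.sign σ) with h | h <;> rw [h]
    · simpa using std.isUnit_det S.bM
    · simpa using (std.isUnit_det S.bM).neg
  have e3 : (Matrix.of w).det = (∏ i, S.a i) * (Equiv.Perm.sign σ • std.det S.bM) := by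
    rw [e0, e1, e2, smul_eq_mul]
  set bL := Module.Basis.span hb with hbL
  have hmem : ∀ i, b i ∈ Submodule.span (Polynomial F) (Set.range b) := fun i =>
    Submodule.subset_span (Set.mem_range_self i)
  set C : Matrix (Fin n) (Fin n) (Polynomial F) := fun i j => bL.repr (S.bN i) j with hC
  set C' : Matrix (Fin n) (Fin n) (Polynomial F) := fun i j => S.bN.repr ⟨b i, hmem i⟩ j with hC'
  have hW : Matrix.of w = C * Matrix.of b := by
    funext i k
    have h1 : (S.bN i : Fin n → Polynomial F) = ∑ j, C i j • b j := by
      calc (S.bN i : Fin n → Polynomial F)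
          = (Submodule.span (Polynomial F) (Set.range b)).subtype
            (∑ j, bL.repr (S.bN i) j • bL j) := by rw [Module.Basis.sum_repr]; rfl
        _ = ∑ j, bL.repr (S.bN i) j • (Submodule.span (Polynomial F) (Set.range b)).subtype
            (bL j) := by rw [map_sum]; simp only [map_smul]
        _ = ∑ j, C i j • b j := by
            apply Finset.sum_congr rfl
            intro j _
            congr 1
            rw [hbL]
            exact congrArg Subtype.val (Module.Basis.span_apply hb j)
    rw [Matrix.mul_apply]
    show (S.bN i : Fin n → Polynomial F) k = _
    rw [h1, Finset.sum_apply]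
    apply Finset.sum_congr rfl
    intro j _
    rw [Pi.smul_apply, smul_eq_mul]
    rfl
  have hB : Matrix.of b = C' * Matrix.of w := by
    funext i k
    have h1 : b i = ∑ j, C' i j • w j := by
      calc b i
          = (Submodule.span (Polynomial F) (Set.range b)).subtype
            (∑ j, S.bN.repr ⟨b i, hmem i⟩ j • S.bN j) := by rw [Module.Basis.sum_repr]; rfl
        _ = ∑ j, S.bN.repr ⟨b i, hmem i⟩ j • (Submodule.span (Polynomial F) (Set.range b)).subtype
            (S.bN j) := by rw [map_sum]; simp only [map_smul]
        _ = ∑ j, C' i j • w j := rfl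
    rw [Matrix.mul_apply]
    show b i k = _
    conv_lhs => rw [h1]
    rw [Finset.sum_apply]
    apply Finset.sum_congr rfl
    intro j _
    rw [Pi.smul_apply, smul_eq_mul]
    rfl
  have hdetB : (Matrix.of b).det = C'.det * C.det * (Matrix.of b).det := by
    conv_lhs => rw [hB, Matrix.det_mul, hW, Matrix.det_mul]
    ring
  have hCC' : C'.det * C.det = 1 := by
    apply mul_right_cancel₀ hdet
    rw [one_mul]
    exact hdetB.symm
  have hCunit : IsUnit C.det := IsUnit.of_mul_eq_one _ (by rw [mul_comm] at hCC'; exact hCC')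
  have hdegC : C.det.degree = 0 := Polynomial.degree_eq_zero_of_isUnit hCunit
  have hdegu : (Equiv.Perm.sign σ • std.det S.bM : Polynomial F).degree = 0 :=
    Polynomial.degree_eq_zero_of_isUnit hu
  have hWB : (Matrix.of w).det = C.det * (Matrix.of b).det := by rw [hW, Matrix.det_mul]
  calc (Matrix.of b).det.degree
      = C.det.degree + (Matrix.of b).det.degree := by rw [hdegC, zero_add]
    _ = (Matrix.of w).det.degree := by rw [hWB, Polynomial.degree_mul]
    _ = (∏ i, S.a i).degree + (Equiv.Perm.sign σ • std.det S.bM : Polynomial F).degree := by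
        rw [e3, Polynomial.degree_mul]
    _ = (∏ i, S.a i).degree := by rw [hdegu, add_zero]
    _ = ∑ i, (S.a i).degree := Polynomial.degree_prod _ _

/-- The quotient by the lattice is a finite-dimensional `F`-vector space of dimension
at most the degree of the determinant. -/
theorem quotient_finrank_le {F : Type*} [Field F] {n : ℕ}
    (b : Fin n → (Fin n → Polynomial F))
    (S : Module.Basis.SmithNormalForm (Submodule.span (Polynomial F) (Set.range b)) (Fin n) n)
    (ha : ∀ i, S.a i ≠ 0)
    (hsum : ∑ i, (S.a i).natDegree = (Matrix.of b).det.natDegree) :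
    ∃ _ : FiniteDimensional F
      ((Fin n → Polynomial F) ⧸ Submodule.span (Polynomial F) (Set.range b)),
      Module.finrank F
        ((Fin n → Polynomial F) ⧸ Submodule.span (Polynomial F) (Set.range b)) ≤
        (Matrix.of b).det.natDegree := by
  classical
  have hfbij : Function.Bijective S.f := Finite.injective_iff_bijective.mp S.f.injective
  set T := ∀ i : Fin n, degreeLT F ((S.a i).natDegree) with hT
  let φ₀ : T →ₗ[F] (Fin n → Polynomial F) :=
    { toFun := fun t => ∑ i, ((t i : Polynomial F) • S.bM (S.f i))
      map_add' := by
        intro t t'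
        rw [← Finset.sum_add_distrib]
        apply Finset.sum_congr rfl
        intro i _
        rw [show ((t + t') i : Polynomial F) = (t i : Polynomial F) + (t' i : Polynomial F) from rfl,
          add_smul]
      map_smul' := by
        intro c t
        show ∑ i, (((c • t) i : Polynomial F) • S.bM (S.f i)) = _
        rw [RingHom.id_apply, Finset.smul_sum]
        apply Finset.sum_congr rfl
        intro i _
        rw [show ((c • t) i : Polynomial F) = c • (t i : Polynomial F) from rfl, smul_assoc] }
  let φ : T →ₗ[F] ((Fin n → Polynomial F) ⧸ Submodule.span (Polynomial F) (Set.range b)) :=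
    ((Submodule.span (Polynomial F) (Set.range b)).mkQ.restrictScalars F) ∘ₗ φ₀
  have hφ : Function.Surjective φ := by
    intro q
    obtain ⟨u, rfl⟩ := Submodule.Quotient.mk_surjective _ q
    set Mo : Fin n → Polynomial F := fun i => S.a i * C ((S.a i).leadingCoeff)⁻¹ with hMo
    have hMoMonic : ∀ i, (Mo i).Monic := fun i => Polynomial.monic_mul_leadingCoeff_inv (ha i)
    have hMoDeg : ∀ i, (Mo i).degree = (S.a i).degree := fun i =>
      Polynomial.degree_mul_leadingCoeff_inv _ (ha i)
    set p : Fin n → Polynomial F := fun j => S.bM.repr u j with hp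
    set r : Fin n → Polynomial F := fun i => p (S.f i) %ₘ Mo i with hr
    have hrmem : ∀ i, r i ∈ degreeLT F ((S.a i).natDegree) := by
      intro i
      rw [Polynomial.mem_degreeLT]
      calc (r i).degree < (Mo i).degree := Polynomial.degree_modByMonic_lt _ (hMoMonic i)
        _ = (S.a i).degree := hMoDeg i
        _ = ((S.a i).natDegree : WithBot ℕ) := Polynomial.degree_eq_natDegree (ha i)
    refine ⟨fun i => ⟨r i, hrmem i⟩, ?_⟩
    show Submodule.Quotient.mk (∑ i, r i • S.bM (S.f i)) = Submodule.Quotient.mk u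
    rw [Submodule.Quotient.eq]
    have hu : u = ∑ i, p (S.f i) • S.bM (S.f i) := by
      have h1 : u = ∑ j, p j • S.bM j := (Module.Basis.sum_repr S.bM u).symm
      rw [h1]
      exact (Fintype.sum_bijective S.f hfbij _ _ (fun i => rfl)).symm
    have hsplit : (∑ i, r i • S.bM (S.f i)) - u
        = -∑ i, ((p (S.f i) /ₘ Mo i) * C ((S.a i).leadingCoeff)⁻¹) • (S.a i • S.bM (S.f i)) := by
      rw [hu, ← Finset.sum_sub_distrib, ← Finset.sum_neg_distrib]
      apply Finset.sum_congr rfl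
      intro i _
      have h2 : p (S.f i) %ₘ Mo i +
          S.a i * C ((S.a i).leadingCoeff)⁻¹ * (p (S.f i) /ₘ Mo i) = p (S.f i) :=
        Polynomial.modByMonic_add_div (p (S.f i)) (Mo i)
      show (p (S.f i) %ₘ Mo i) • S.bM (S.f i) - p (S.f i) • S.bM (S.f i) = _
      rw [← sub_smul, smul_smul, ← neg_smul]
      congr 1
      linear_combination h2
    rw [hsplit]
    apply Submodule.neg_mem
    apply Submodule.sum_mem
    intro i _
    apply Submodule.smul_mem
    rw [← S.snf i]
    exact (S.bN i).2
  haveI : ∀ i : Fin n, FiniteDimensional F (degreeLT F ((S.a i).natDegree)) := fun i =>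
    Module.Finite.equiv (degreeLTEquiv F _).symm
  haveI hTfd : FiniteDimensional F T :=
    inferInstanceAs (FiniteDimensional F (∀ i : Fin n, degreeLT F ((S.a i).natDegree)))
  have hTrank : Module.finrank F T = ∑ i, (S.a i).natDegree := by
    show Module.finrank F (∀ i : Fin n, degreeLT F ((S.a i).natDegree)) = _
    rw [Module.finrank_pi_fintype F]
    apply Finset.sum_congr rfl
    intro i _
    rw [(degreeLTEquiv F _).finrank_eq]
    simp [Module.finrank_pi]
  haveI hQfd : FiniteDimensional F
      ((Fin n → Polynomial F) ⧸ Submodule.span (Polynomial F) (Set.range b)) :=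
    Module.Finite.of_surjective φ hφ
  refine ⟨hQfd, ?_⟩
  have h1 := LinearMap.finrank_range_le φ
  rw [LinearMap.range_eq_top.mpr hφ, finrank_top] at h1
  rw [hTrank, hsum] at h1
  exact h1

/-- **(Mahler's corollary)** Let `L ⊆ F_q[x]^n` be a full-rank lattice, spanned by
linearly independent `b_1, …, b_n`, with covolume `covol(L) = deg(det B)`.  Then
there is a nonzero `v ∈ L` with `n · |v| ≤ covol(L)`. -/
theorem mahler_short_vector {F : Type*} [Field F] [Fintype F] {n : ℕ} (hn : 0 < n)
    (b : Fin n → (Fin n → Polynomial F))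
    (hb : LinearIndependent (Polynomial F) b) :
    ∃ v : Fin n → Polynomial F,
      v ∈ Submodule.span (Polynomial F) (Set.range b) ∧ v ≠ 0 ∧
      n • degNorm v ≤ (Matrix.of b).det.degree := by
  classical
  -- the determinant is nonzero
  have hdet : (Matrix.of b).det ≠ 0 := det_ne_zero_of_linearIndependent_rows b hb
  -- Smith normal form of the lattice L
  obtain ⟨m, S⟩ :=
    (Submodule.span (Polynomial F) (Set.range b)).smithNormalForm
      (Pi.basisFun (Polynomial F) (Fin n))
  obtain rfl : n = m := by
    have e := S.bN.indexEquiv (Module.Basis.span hb)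
    simpa using (Fintype.card_congr e).symm
  -- the degree of the determinant is the sum of the degrees of the diagonal entries
  have hdeg : (Matrix.of b).det.degree = ∑ i, (S.a i).degree :=
    degree_det_eq_sum_smith b hb hdet S
  have ha : ∀ i, S.a i ≠ 0 := by
    intro i hai
    apply hdet
    rw [← Polynomial.degree_eq_bot, hdeg]
    exact WithBot.sum_eq_bot_iff.mpr
      ⟨i, Finset.mem_univ i, by rw [hai, Polynomial.degree_zero]⟩
  set d : ℕ := (Matrix.of b).det.natDegree with hd
  have hdd : ((d : ℕ) : WithBot ℕ) = (Matrix.of b).det.degree :=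
    (Polynomial.degree_eq_natDegree hdet).symm
  have hsum : ∑ i, (S.a i).natDegree = d := by
    have hcast : ((∑ i, (S.a i).natDegree : ℕ) : WithBot ℕ) = ((d : ℕ) : WithBot ℕ) := by
      rw [hdd, hdeg, Nat.cast_sum]
      apply Finset.sum_congr rfl
      intro i _
      exact (Polynomial.degree_eq_natDegree (ha i)).symm
    exact_mod_cast hcast
  -- the quotient is finite dimensional over F of dimension at most d
  obtain ⟨hfd, hrank⟩ := quotient_finrank_le b S ha hsum
  -- pigeonhole
  set m0 : ℕ := d / n with hm0
  -- inclusion of the box into F[x]^n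
  let incl : (∀ _ : Fin n, degreeLT F (m0 + 1)) →ₗ[F] (Fin n → Polynomial F) :=
    { toFun := fun t i => (t i : Polynomial F)
      map_add' := fun t t' => rfl
      map_smul' := fun c t => rfl }
  have hincl : Function.Injective incl := by
    intro t t' h
    funext i
    exact Subtype.ext (congrFun h i)
  let ψ : (∀ _ : Fin n, degreeLT F (m0 + 1)) →ₗ[F]
      ((Fin n → Polynomial F) ⧸ Submodule.span (Polynomial F) (Set.range b)) :=
    ((Submodule.span (Polynomial F) (Set.range b)).mkQ.restrictScalars F) ∘ₗ incl
  have hbox : Module.finrank F (∀ _ : Fin n, degreeLT F (m0 + 1)) = n * (m0 + 1) := by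
    haveI : FiniteDimensional F (degreeLT F (m0 + 1)) :=
      Module.Finite.equiv (degreeLTEquiv F (m0 + 1)).symm
    rw [Module.finrank_pi_fintype F]
    have h2 : Module.finrank F (degreeLT F (m0 + 1)) = m0 + 1 := by
      rw [(degreeLTEquiv F (m0 + 1)).finrank_eq]
      simp [Module.finrank_pi]
    simp [h2, mul_comm]
  have hψ : ¬ Function.Injective ψ := by
    intro hinj
    have h1 := LinearMap.finrank_le_finrank_of_injective hinj
    rw [hbox] at h1
    have h3 : n * (m0 + 1) ≤ d := h1.trans hrank
    have h4 : n * (m0 + 1) = n * (d / n) + n := by rw [hm0]; ring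
    have h5 := Nat.div_add_mod d n
    have h6 := Nat.mod_lt d hn
    omega
  rw [Function.not_injective_iff] at hψ
  obtain ⟨t, t', hψt, htt⟩ := hψ
  refine ⟨incl (t - t'), ?_, ?_, ?_⟩
  · have h0 : ψ (t - t') = 0 := by rw [map_sub, hψt, sub_self]
    have h1 : (Submodule.span (Polynomial F) (Set.range b)).mkQ (incl (t - t')) = 0 := h0
    rwa [← LinearMap.mem_ker, Submodule.ker_mkQ] at h1
  · intro h0
    apply htt
    have h1 : incl (t - t') = incl 0 := by simpa using h0
    have h2 := hincl h1
    rwa [sub_eq_zero] at h2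
  · -- degree bound
    have hdn : degNorm (incl (t - t')) ≤ ((m0 : ℕ) : WithBot ℕ) := by
      apply Finset.sup_le
      intro i _
      have h1 : ((t - t') i : Polynomial F) ∈ degreeLE F (m0 : ℕ) := by
        rw [← Polynomial.degreeLT_succ_eq_degreeLE]
        exact ((t - t') i).2
      rwa [Polynomial.mem_degreeLE] at h1
    have h1 : n • degNorm (incl (t - t')) ≤ n • ((m0 : ℕ) : WithBot ℕ) :=
      nsmul_le_nsmul_right hdn n
    have h2 : n • ((m0 : ℕ) : WithBot ℕ) = ((n * m0 : ℕ) : WithBot ℕ) := by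
      rw [Nat.cast_withBot, Nat.cast_withBot, ← WithBot.coe_nsmul, smul_eq_mul]
    have h3 : ((n * m0 : ℕ) : WithBot ℕ) ≤ ((d : ℕ) : WithBot ℕ) := by
      rw [Nat.cast_le]
      have h4 : n * m0 = n * (d / n) := by rw [hm0]
      have h5 := Nat.div_add_mod d n
      omega
    rw [← hdd]
    exact h1.trans (h2 ▸ h3)
end
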